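/- For every p ∈ {1, …, m}, the dimension of P^c(E) is at least the dimension of P^{(c_p)}(E) plus one. -/
import Mathlib


open Finset

/-- A (loopless) matroid on a finite ground set, given by its independent sets. -/
structure FinMatroid (α : Type*) [Fintype α] [DecidableEq α] where
  Indep : Finset α → Prop
  empty_indep : Indep ∅
  subset_indep : ∀ ⦃I J : Finset α⦄, Indep J → I ⊆ J → Indep I
  exchange : ∀ ⦃I J : Finset α⦄, Indep I → Indep J → I.card < J.card →
    ∃ e ∈ J \ I, Indep (insert e I)
  loopless : ∀ e : α, Indep {e}

variable {α : Type*} [Fintype α] [DecidableEq α]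

open Classical in
/-- The rank of a set: the maximum cardinality of an independent subset. -/
noncomputable def FinMatroid.r (M : FinMatroid α) (F : Finset α) : ℕ :=
  (F.powerset.filter M.Indep).sup Finset.card

/-- incidence vector -/
noncomputable def incVec (I : Finset α) : α → ℝ := fun e => if e ∈ I then 1 else 0

/-- x(S) = ∑_{e ∈ S} x_e -/
noncomputable def fsum (x : α → ℝ) (S : Finset α) : ℝ := ∑ e ∈ S, x e

/-- closed set -/
def FinMatroid.ClosedSet (M : FinMatroid α) (F : Finset α) : Prop :=
  ∀ e ∉ F, M.r F < M.r (insert e F)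

/-- F is separable -/
def FinMatroid.Separable (M : FinMatroid α) (F : Finset α) : Prop :=
  ∃ F₁ F₂ : Finset α, F₁ ≠ ∅ ∧ F₂ ≠ ∅ ∧ Disjoint F₁ F₂ ∧ F₁ ∪ F₂ = F ∧
    M.r F₁ + M.r F₂ ≤ M.r F

def FinMatroid.Inseparable (M : FinMatroid α) (F : Finset α) : Prop :=
  ¬ M.Separable F

/-- the k-rank r^k(F) = k - r(E \ F), as an integer -/
noncomputable def FinMatroid.krank (M : FinMatroid α) (k : ℕ) (F : Finset α) : ℤ :=
  (k : ℤ) - (M.r Fᶜ : ℤ)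

/-- F is k-separable -/
noncomputable def FinMatroid.kSeparable (M : FinMatroid α) (k : ℕ) (F : Finset α) : Prop :=
  ∃ F₁ F₂ : Finset α, F₁ ≠ ∅ ∧ F₂ ≠ ∅ ∧ Disjoint F₁ F₂ ∧ F₁ ∪ F₂ = F ∧
    M.krank k F₁ + M.krank k F₂ = M.krank k F

noncomputable def FinMatroid.kInseparable (M : FinMatroid α) (k : ℕ) (F : Finset α) : Prop :=
  ¬ M.kSeparable k F

/-- convex hull of incidence vectors of independent sets of cardinality exactly k -/
noncomputable def exactPolytope (M : FinMatroid α) (k : ℕ) : Set (α → ℝ) :=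
  convexHull ℝ {x | ∃ I : Finset α, M.Indep I ∧ I.card = k ∧ x = incVec I}

/-- the cardinality constrained matroid polytope P^c(E) -/
noncomputable def cardPolytope (M : FinMatroid α) {m : ℕ} (c : Fin m → ℕ) : Set (α → ℝ) :=
  convexHull ℝ {x | ∃ I : Finset α, M.Indep I ∧ (∃ p : Fin m, I.card = c p) ∧ x = incVec I}

/-- dimension of (the affine hull of) a subset of ℝ^E -/
noncomputable def polyDim (s : Set (α → ℝ)) : ℕ :=
  Module.finrank ℝ (affineSpan ℝ s).direction

/-- `a · x ≤ a₀` defines a facet of `P` -/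
noncomputable def IsFacet (P : Set (α → ℝ)) (a : α → ℝ) (a₀ : ℝ) : Prop :=
  (∀ x ∈ P, ∑ e, a e * x e ≤ a₀) ∧
  polyDim {x ∈ P | ∑ e, a e * x e = a₀} + 1 = polyDim P



lemma exists_indep_card (M : FinMatroid α) {k : ℕ} (hk : k ≤ M.r Finset.univ) :
    ∃ I : Finset α, M.Indep I ∧ I.card = k := by
  classical
  have hne : (Finset.univ.powerset.filter M.Indep).Nonempty := by
    refine ⟨∅, Finset.mem_filter.2 ⟨Finset.mem_powerset.2 (Finset.empty_subset _), M.empty_indep⟩⟩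
  obtain ⟨J, hJmem, hJ⟩ := Finset.exists_mem_eq_sup _ hne Finset.card
  have hJindep : M.Indep J := (Finset.mem_filter.1 hJmem).2
  have hJcard : J.card = M.r Finset.univ := by
    rw [FinMatroid.r]; rw [hJ]
  obtain ⟨I, hIJ, hIcard⟩ := Finset.exists_subset_card_eq (hJcard ▸ hk)
  exact ⟨I, M.subset_indep hJindep hIJ, hIcard⟩

lemma sum_incVec (I : Finset α) : ∑ e, incVec I e = (I.card : ℝ) := by
  classical
  simp [incVec, Finset.sum_boole, Finset.filter_mem_eq_inter]

lemma mem_hyp_of_mem_span {S : Set (α → ℝ)} {r : ℝ}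
    (hS : ∀ x ∈ S, ∑ e, x e = r) {x : α → ℝ}
    (hx : x ∈ affineSpan ℝ S) : ∑ e, x e = r := by
  classical
  let f : (α → ℝ) →ₗ[ℝ] ℝ := ∑ e, LinearMap.proj e
  have hf : ∀ y : α → ℝ, f y = ∑ e, y e := by
    intro y; simp [f]
  let H : AffineSubspace ℝ (α → ℝ) :=
    AffineSubspace.comap f.toAffineMap (affineSpan ℝ ({r} : Set ℝ))
  have hle : affineSpan ℝ S ≤ H := by
    apply affineSpan_le.2
    intro y hy
    show f.toAffineMap y ∈ affineSpan ℝ ({r} : Set ℝ)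
    have : f y = r := by rw [hf]; exact hS y hy
    rw [(AffineSubspace.mem_affineSpan_singleton ℝ ℝ)]
    show f y = r
    rw [hf]; exact hS y hy
  have h2 : f x ∈ affineSpan ℝ ({r} : Set ℝ) := hle hx
  have := (AffineSubspace.mem_affineSpan_singleton ℝ ℝ).1 h2
  rw [hf] at this; exact this

/-- dim P^c(E) ≥ dim P^(c_p)(E) + 1 for every p. -/
theorem cardPolytope_dim_ge {α : Type*} [Fintype α] [DecidableEq α]
    (M : FinMatroid α)
    {m : ℕ} (c : Fin m → ℕ) (hm : 2 ≤ m) (hmono : StrictMono c)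
    (hlast : c ⟨m - 1, by omega⟩ ≤ M.r Finset.univ)
    (p : Fin m) :
    polyDim (exactPolytope M (c p)) + 1 ≤ polyDim (cardPolytope M c) := by
  classical
  -- independent sets of each needed cardinality
  have hple : ∀ q : Fin m, c q ≤ M.r Finset.univ := by
    intro q
    refine le_trans ?_ hlast
    exact hmono.monotone (by
      have := q.2
      exact Fin.le_def.2 (by simp; omega))
  have hp : c p ≤ M.r Finset.univ := hple p
  obtain ⟨Ip, hIp, hIpc⟩ := exists_indep_card M hp
  -- choose q ≠ p
  obtain ⟨q, hqp⟩ : ∃ q : Fin m, c q ≠ c p := by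
    rcases Nat.lt_or_ge (p : ℕ) (m - 1) with h | h
    · refine ⟨⟨m - 1, by omega⟩, fun hcq => ?_⟩
      have h2 := Fin.mk.inj_iff.1 (hmono.injective hcq).symm
      omega
    · have hp1 : (p : ℕ) = m - 1 := by have := p.2; omega
      refine ⟨⟨0, by omega⟩, fun hcq => ?_⟩
      have h2 := Fin.mk.inj_iff.1 (hmono.injective hcq).symm
      omega
  have hq : c q ≤ M.r Finset.univ := hple q
  obtain ⟨Iq, hIq, hIqc⟩ := exists_indep_card M hq
  set Se : Set (α → ℝ) := {x | ∃ I : Finset α, M.Indep I ∧ I.card = c p ∧ x = incVec I}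
  set Sc : Set (α → ℝ) := {x | ∃ I : Finset α, M.Indep I ∧ (∃ p : Fin m, I.card = c p) ∧ x = incVec I}
  have hsub : Se ⊆ Sc := by
    rintro x ⟨I, hI, hIc, rfl⟩; exact ⟨I, hI, ⟨p, hIc⟩, rfl⟩
  have hAspan : affineSpan ℝ (exactPolytope M (c p)) = affineSpan ℝ Se :=
    affineSpan_convexHull Se
  have hBspan : affineSpan ℝ (cardPolytope M c) = affineSpan ℝ Sc :=
    affineSpan_convexHull Sc
  have hAB : affineSpan ℝ Se ≤ affineSpan ℝ Sc :=
    affineSpan_mono ℝ hsub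
  have hvB : incVec Iq ∈ affineSpan ℝ Sc :=
    subset_affineSpan ℝ Sc ⟨Iq, hIq, ⟨q, hIqc⟩, rfl⟩
  have hvA : incVec Iq ∉ affineSpan ℝ Se := by
    intro hmem
    have hsum : ∀ x ∈ Se, ∑ e, x e = (c p : ℝ) := by
      rintro x ⟨I, _, hIc, rfl⟩; rw [sum_incVec, hIc]
    have := mem_hyp_of_mem_span hsum hmem
    rw [sum_incVec, hIqc] at this
    exact hqp (Nat.cast_injective this)
  have hAne : (affineSpan ℝ Se : Set (α → ℝ)).Nonempty :=
    ⟨incVec Ip, subset_affineSpan ℝ Se ⟨Ip, hIp, hIpc, rfl⟩⟩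
  have hlt : affineSpan ℝ Se < affineSpan ℝ Sc :=
    lt_of_le_of_ne hAB (fun h => hvA (h ▸ hvB))
  have hdlt := AffineSubspace.direction_lt_of_nonempty hlt hAne
  have := Submodule.finrank_lt_finrank_of_lt hdlt
  unfold polyDim
  rw [hAspan, hBspan]
  omega
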